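/- Let x : ℕ → ℝ → ℝ be a family of differentiable functions satisfying, for every t ∈ ℝ: x₁ has derivative −x₁(t) + 1 at t, and for every k ≥ 1, x_{k+1} has derivative −x_{k+1}(t) + 2·x_k(t) at t; and x_k(0) = 1 for every k ≥ 1. Then for every M ∈ ℝ there exist k ≥ 1 and T ∈ ℝ such that x_k(t) > M for all t ≥ T; consequently, the supremum norm of the infinite state vector, sup_{k ≥ 1} |x_k(t)|, tends to infinity as t → ∞. -/

import Mathlib

open Filter ENNReal

/-- Comparison lemma: if `f' t + f t ≥ b` for `t ≥ T`, then for any `c < b`,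
`f` eventually exceeds `c`. -/
lemma cascade_eventually_gt (f f' : ℝ → ℝ) (hf : ∀ t, HasDerivAt f (f' t) t)
    (b T : ℝ) (hb : ∀ t, T ≤ t → b ≤ f t + f' t) :
    ∀ c : ℝ, c < b → ∃ T' : ℝ, ∀ t : ℝ, T' ≤ t → c < f t := by
  intro c hc
  set g : ℝ → ℝ := fun t => Real.exp t * (f t - b) with hg
  have hg' : ∀ t, HasDerivAt g (Real.exp t * (f t - b) + Real.exp t * f' t) t := by
    intro t
    exact (Real.hasDerivAt_exp t).mul ((hf t).sub_const b)
  -- g is monotone on [T, ∞)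
  have hmono : MonotoneOn g (Set.Ici T) := by
    apply monotoneOn_of_deriv_nonneg (convex_Ici T)
    · have hfc : Continuous f := by
        have : Differentiable ℝ f := fun t => (hf t).differentiableAt
        exact this.continuous
      exact (Real.continuous_exp.mul (hfc.sub continuous_const)).continuousOn
    · intro t ht
      exact ((hg' t).differentiableAt).differentiableWithinAt
    · intro t ht
      rw [interior_Ici] at ht
      rw [(hg' t).deriv]
      have h1 : b ≤ f t + f' t := hb t (le_of_lt ht)
      have : 0 ≤ Real.exp t * (f t + f' t - b) := by
        apply mul_nonneg (Real.exp_nonneg t); linarith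
      nlinarith [this]
  -- bound: for t ≥ T, f t ≥ b + (f T - b) * exp (T - t)
  have hbound : ∀ t, T ≤ t → b + (f T - b) * Real.exp (T - t) ≤ f t := by
    intro t ht
    have h := hmono (Set.mem_Ici.mpr le_rfl) (Set.mem_Ici.mpr ht) ht
    -- g T ≤ g t : exp T * (f T - b) ≤ exp t * (f t - b)
    have hexp : (0:ℝ) < Real.exp t := Real.exp_pos t
    have : Real.exp T * (f T - b) ≤ Real.exp t * (f t - b) := h
    have hdiv : Real.exp T * (f T - b) / Real.exp t ≤ f t - b := by
      rw [div_le_iff₀ hexp]; linarith [this]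
    have hrw : Real.exp T * (f T - b) / Real.exp t = (f T - b) * Real.exp (T - t) := by
      rw [Real.exp_sub]; ring
    rw [hrw] at hdiv; linarith
  -- RHS tends to b
  have htend : Tendsto (fun t => b + (f T - b) * Real.exp (T - t)) atTop (nhds b) := by
    have h1 : Tendsto (fun t : ℝ => T - t) atTop atBot := by
      have h0 : Tendsto (fun t : ℝ => -t) atTop atBot := tendsto_neg_atTop_atBot
      simpa [sub_eq_add_neg] using tendsto_atBot_add_const_left atTop T h0
    have h2 : Tendsto (fun t : ℝ => Real.exp (T - t)) atTop (nhds 0) :=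
      Real.tendsto_exp_atBot.comp h1
    have h3 := (tendsto_const_nhds (x := b)).add ((tendsto_const_nhds (x := f T - b)).mul h2)
    simpa using h3
  have hev : ∀ᶠ t in atTop, c < b + (f T - b) * Real.exp (T - t) :=
    htend.eventually (eventually_gt_nhds hc)
  rcases eventually_atTop.mp (hev.and (eventually_ge_atTop T)) with ⟨T', hT'⟩
  exact ⟨T', fun t ht => lt_of_lt_of_le (hT' t ht).1 (hbound t (hT' t ht).2)⟩

theorem cascade_sup_norm_blowup (x : ℕ → ℝ → ℝ)
    (h1 : ∀ t : ℝ, HasDerivAt (x 1) (-(x 1 t) + 1) t)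
    (hk : ∀ k : ℕ, 1 ≤ k → ∀ t : ℝ,
      HasDerivAt (x (k + 1)) (-(x (k + 1) t) + 2 * x k t) t)
    (h0 : ∀ k : ℕ, 1 ≤ k → x k 0 = 1) :
    (∀ M : ℝ, ∃ k : ℕ, 1 ≤ k ∧ ∃ T : ℝ, ∀ t : ℝ, T ≤ t → M < x k t) ∧
    Tendsto (fun t : ℝ => ⨆ k : {k : ℕ // 1 ≤ k}, (‖x k t‖₊ : ℝ≥0∞))
      atTop (nhds ⊤) := by
  -- x 1 ≡ 1
  have hx1 : ∀ t : ℝ, x 1 t = 1 := by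
    have hg : ∀ t : ℝ, HasDerivAt (fun t => Real.exp t * (x 1 t - 1)) 0 t := by
      intro t
      have h : HasDerivAt (fun t => Real.exp t * (x 1 t - 1)) _ t :=
        (Real.hasDerivAt_exp t).mul (((h1 t)).sub_const 1)
      convert h using 1
      ring
    have hdiff : Differentiable ℝ (fun t => Real.exp t * (x 1 t - 1)) :=
      fun t => (hg t).differentiableAt
    have hconst : ∀ t : ℝ, Real.exp t * (x 1 t - 1) = Real.exp 0 * (x 1 0 - 1) := by
      intro t
      exact is_const_of_deriv_eq_zero hdiff (fun t => (hg t).deriv) t 0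
    intro t
    have := hconst t
    rw [h0 1 le_rfl] at this
    have h2 : Real.exp t * (x 1 t - 1) = 0 := by simpa using this
    have h3 := (mul_eq_zero.mp h2).resolve_left (Real.exp_ne_zero t)
    linarith
  -- main induction
  have main : ∀ n : ℕ, ∀ c : ℝ, c < 2 ^ n → ∃ T : ℝ, ∀ t : ℝ, T ≤ t → c < x (n + 1) t := by
    intro n
    induction n with
    | zero =>
      intro c hc
      exact ⟨0, fun t _ => by rw [hx1 t]; simpa using hc⟩
    | succ n ih =>
      intro c hc
      set c' : ℝ := (c / 2 + 2 ^ n) / 2 with hc'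
      have hc'lt : c' < 2 ^ n := by
        have : c / 2 < 2 ^ n := by
          have : (2:ℝ) ^ (n + 1) = 2 * 2 ^ n := by ring
          rw [this] at hc; linarith
        rw [hc']; linarith
      have h2c' : c < 2 * c' := by
        have : c / 2 < 2 ^ n := by
          have : (2:ℝ) ^ (n + 1) = 2 * 2 ^ n := by ring
          rw [this] at hc; linarith
        rw [hc']; linarith
      obtain ⟨T, hT⟩ := ih c' hc'lt
      have hd := hk (n + 1) (Nat.le_add_left 1 n) 
      have hb : ∀ t, T ≤ t →
          2 * c' ≤ x (n + 1 + 1) t + (-(x (n + 1 + 1) t) + 2 * x (n + 1) t) := by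
        intro t ht
        have := hT t ht
        nlinarith
      exact cascade_eventually_gt (x (n + 1 + 1)) _ hd (2 * c') T hb c h2c'
  have part1 : ∀ M : ℝ, ∃ k : ℕ, 1 ≤ k ∧ ∃ T : ℝ, ∀ t : ℝ, T ≤ t → M < x k t := by
    intro M
    obtain ⟨n, hn⟩ := pow_unbounded_of_one_lt M (by norm_num : (1:ℝ) < 2)
    obtain ⟨T, hT⟩ := main n M hn
    exact ⟨n + 1, Nat.le_add_left 1 n, T, hT⟩
  refine ⟨part1, ?_⟩
  apply ENNReal.tendsto_nhds_top
  intro n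
  obtain ⟨k, hk1, T, hT⟩ := part1 n
  filter_upwards [eventually_ge_atTop T] with t ht
  have hlt : (n : ℝ) < x k t := hT t ht
  have hle : (n : ℝ≥0∞) < (‖x k t‖₊ : ℝ≥0∞) := by
    have hnn : (n : NNReal) < ‖x k t‖₊ := by
      rw [← NNReal.coe_lt_coe]
      simp only [coe_nnnorm, Real.norm_eq_abs, NNReal.coe_natCast]
      exact lt_of_lt_of_le hlt (le_abs_self _)
    exact_mod_cast hnn
  exact lt_of_lt_of_le hle (le_iSup (fun j : {j : ℕ // 1 ≤ j} => (‖x j t‖₊ : ℝ≥0∞)) ⟨k, hk1⟩)
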